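/- Let σ ≥ 1, let μ : (0,∞) → ℝ be a normal majorant of the class (σ,1) with μ(η) → 0 as η → 0⁺, let γ = {t ∈ ℂ : |t+1| = 1}, and let g : γ → ℝ be defined by g(t) = 8·∫₀¹ μ(η)·[((Re t)² − (Im t)²)(η⁴ + |t|⁴) − 2η²|t|⁴]/|η² − t²|⁴ · η dη. Then there exists a continuous function F : {z ∈ ℂ : |z+1| ≤ 1} → ℝ such that F(z) = Re g̃(z) for all z with |z+1| < 1, where g̃(z) = (1/(2πi))·∮_γ g(t)/(t − z) dt is the Cauchy-type integral of g. -/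

import Mathlib

open Set MeasureTheory intervalIntegral Real
open scoped Interval

/-- The special density `g(t) = 8·∫₀¹ μ(η)·[((Re t)² − (Im t)²)(η⁴ + |t|⁴) − 2η²|t|⁴]/|η² − t²|⁴ · η dη`. -/
noncomputable def gFun (μ : ℝ → ℝ) (t : ℂ) : ℝ :=
  8 * ∫ η in (0 : ℝ)..1, μ η *
      (((t.re ^ 2 - t.im ^ 2) * (η ^ 4 + ‖t‖ ^ 4)
          - 2 * η ^ 2 * ‖t‖ ^ 4) /
        ‖(η : ℂ) ^ 2 - t ^ 2‖ ^ 4) * η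

noncomputable def ker (t : ℂ) (η : ℝ) : ℝ :=
  ((t.re ^ 2 - t.im ^ 2) * (η ^ 4 + ‖t‖ ^ 4)
          - 2 * η ^ 2 * ‖t‖ ^ 4) /
        ‖(η : ℂ) ^ 2 - t ^ 2‖ ^ 4

lemma gFun_eq (μ : ℝ → ℝ) (t : ℂ) :
    gFun μ t = 8 * ∫ η in (0 : ℝ)..1, μ η * ker t η * η := rfl

lemma num_eq (t : ℂ) (η : ℝ) :
    (t.re ^ 2 - t.im ^ 2) * (η ^ 4 + ‖t‖ ^ 4) - 2 * η ^ 2 * ‖t‖ ^ 4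
      = ((starRingEnd ℂ t) ^ 2 * ((η : ℂ) ^ 2 - t ^ 2) ^ 2).re := by
  have h4 : ‖t‖ ^ 4 = (t.re ^ 2 + t.im ^ 2) ^ 2 := by
    rw [show (4 : ℕ) = 2 * 2 from rfl, pow_mul, Complex.sq_norm, Complex.normSq_apply]; ring
  rw [h4]
  simp only [pow_two, Complex.mul_re, Complex.mul_im, Complex.sub_re, Complex.sub_im,
    Complex.conj_re, Complex.conj_im, Complex.ofReal_re, Complex.ofReal_im]
  ring

lemma num_bound (t : ℂ) (η : ℝ) :
    |(t.re ^ 2 - t.im ^ 2) * (η ^ 4 + ‖t‖ ^ 4) - 2 * η ^ 2 * ‖t‖ ^ 4|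
      ≤ ‖t‖ ^ 2 * ‖(η : ℂ) ^ 2 - t ^ 2‖ ^ 2 := by
  rw [num_eq]
  calc |((starRingEnd ℂ t) ^ 2 * ((η : ℂ) ^ 2 - t ^ 2) ^ 2).re|
      ≤ ‖(starRingEnd ℂ t) ^ 2 * ((η : ℂ) ^ 2 - t ^ 2) ^ 2‖ :=
        Complex.abs_re_le_norm _
    _ = ‖t‖ ^ 2 * ‖(η : ℂ) ^ 2 - t ^ 2‖ ^ 2 := by
        simp [map_mul, map_pow]

lemma ker_bound (t : ℂ) (η : ℝ) (hA : (η : ℂ) ^ 2 - t ^ 2 ≠ 0) :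
    |ker t η| ≤ ‖t‖ ^ 2 / ‖(η : ℂ) ^ 2 - t ^ 2‖ ^ 2 := by
  have hpos : 0 < ‖(η : ℂ) ^ 2 - t ^ 2‖ := norm_pos_iff.mpr hA
  unfold ker
  rw [abs_div, abs_of_nonneg (pow_nonneg (norm_nonneg _) 4)]
  rw [div_le_div_iff₀ (by positivity) (by positivity)]
  calc |(t.re ^ 2 - t.im ^ 2) * (η ^ 4 + ‖t‖ ^ 4) - 2 * η ^ 2 * ‖t‖ ^ 4|
        * ‖(η : ℂ) ^ 2 - t ^ 2‖ ^ 2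
      ≤ (‖t‖ ^ 2 * ‖(η : ℂ) ^ 2 - t ^ 2‖ ^ 2)
        * ‖(η : ℂ) ^ 2 - t ^ 2‖ ^ 2 :=
        mul_le_mul_of_nonneg_right (num_bound t η) (by positivity)
    _ = ‖t‖ ^ 2 * ‖(η : ℂ) ^ 2 - t ^ 2‖ ^ 4 := by ring

lemma sphere_re (t : ℂ) (ht : ‖t + 1‖ = 1) :
    t.re = -(‖t‖ ^ 2) / 2 := by
  have h := congrArg (fun x => x ^ 2) ht
  simp only [← Complex.normSq_eq_norm_sq] at h ⊢
  simp only [Complex.normSq_apply, Complex.add_re, Complex.add_im, Complex.one_re,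
    Complex.one_im] at h
  simp only [Complex.normSq_apply]
  nlinarith [h]

lemma abs_sq_eq (t : ℂ) : t.re ^ 2 + t.im ^ 2 = ‖t‖ ^ 2 := by
  rw [← Complex.normSq_eq_norm_sq]; simp [Complex.normSq_apply]; ring

lemma denom_lower (t : ℂ) (ht : ‖t + 1‖ = 1) (hts : ‖t‖ ≤ 1) (η : ℝ) :
    (η ^ 2 + ‖t‖ ^ 2) / 2 ≤ ‖(η : ℂ) ^ 2 - t ^ 2‖ := by
  have hre := sphere_re t ht
  have h1 : ((η : ℂ) ^ 2 - t ^ 2).re = η ^ 2 - (t.re ^ 2 - t.im ^ 2) := by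
    simp [pow_two, Complex.mul_re, Complex.sub_re]
  have h2 := abs_sq_eq t
  have h3 := Complex.abs_re_le_norm ((η : ℂ) ^ 2 - t ^ 2)
  rw [h1] at h3
  have hs0 := norm_nonneg t
  have hre2 : t.re ^ 2 = ‖t‖ ^ 4 / 4 := by rw [hre]; ring
  have him2 : t.im ^ 2 = ‖t‖ ^ 2 - ‖t‖ ^ 4 / 4 := by
    rw [← h2, hre2]; ring
  have hs2 : ‖t‖ ^ 2 ≤ 1 := by nlinarith
  have hs4 : ‖t‖ ^ 4 ≤ ‖t‖ ^ 2 := by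
    nlinarith [mul_nonneg (sq_nonneg (‖t‖)) (sub_nonneg.2 hs2)]
  have h4 : (η ^ 2 + ‖t‖ ^ 2) / 2 ≤ η ^ 2 - (t.re ^ 2 - t.im ^ 2) := by
    rw [hre2, him2]; nlinarith [sq_nonneg η]
  exact h4.trans ((le_abs_self _).trans h3)

lemma denom_ne_zero (t : ℂ) (ht : ‖t + 1‖ = 1) (ht0 : t ≠ 0)
    (η : ℝ) (hη : η ∈ Set.Icc (0:ℝ) 1) : (η : ℂ) ^ 2 - t ^ 2 ≠ 0 := by
  intro h
  have h' : ((η : ℂ) - t) * ((η : ℂ) + t) = 0 := by ring_nf; linear_combination h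
  have hre := sphere_re t ht
  rcases mul_eq_zero.1 h' with h1 | h1
  · have : t = (η : ℂ) := by linear_combination -h1
    subst this
    simp only [Complex.ofReal_re] at hre
    have h2 : ‖(η:ℂ)‖ = |η| := (by rw [Complex.norm_real, Real.norm_eq_abs])
    rw [h2, abs_of_nonneg hη.1] at hre
    have : η = 0 := by nlinarith [hη.1]
    apply ht0; simp [this]
  · have : t = -(η : ℂ) := by linear_combination h1
    subst this
    simp only [Complex.neg_re, Complex.ofReal_re, norm_neg] at hre
    have h2 : ‖(η:ℂ)‖ = |η| := (by rw [Complex.norm_real, Real.norm_eq_abs])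
    rw [h2, abs_of_nonneg hη.1] at hre
    have : η = 0 := by nlinarith [hη.1, hη.2]
    apply ht0; simp [this]

lemma mu_nonneg {μ : ℝ → ℝ}
    (hμ_mono : ∀ x y : ℝ, 0 < x → x ≤ y → μ x ≤ μ y)
    (hμ0 : Filter.Tendsto μ (nhdsWithin 0 (Set.Ioi 0)) (nhds 0)) {x : ℝ} (hx : 0 < x) :
    0 ≤ μ x := by
  have h : ∀ᶠ y in nhdsWithin (0:ℝ) (Set.Ioi 0), μ y ≤ μ x := by
    filter_upwards [Ioo_mem_nhdsGT_of_mem (Set.mem_Ico.2 ⟨le_refl (0:ℝ), hx⟩)] with y hy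
    exact hμ_mono y x hy.1 hy.2.le
  exact le_of_tendsto hμ0 h

lemma mu_step {σ : ℝ} {μ : ℝ → ℝ} (hσ : 1 ≤ σ)
    (hμ_mono : ∀ x y : ℝ, 0 < x → x ≤ y → μ x ≤ μ y)
    (hμ_nm : ∀ lam η : ℝ, 1 < lam → 0 < η → μ (lam * η) ≤ σ * lam * μ η)
    (hμ0 : Filter.Tendsto μ (nhdsWithin 0 (Set.Ioi 0)) (nhds 0))
    {η s : ℝ} (hη : 0 < η) (hs : 0 < s) :
    μ η ≤ σ * (1 + η / s) * μ s := by
  have hμs := mu_nonneg hμ_mono hμ0 hs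
  rcases le_or_gt η s with h | h
  · have h1 : μ η ≤ μ s := hμ_mono η s hη h
    have h2 : (1:ℝ) ≤ σ * (1 + η / s) := by
      have h3 : (0:ℝ) ≤ η / s := by positivity
      nlinarith
    nlinarith
  · have hlam : 1 < η / s := (one_lt_div hs).2 h
    have h1 : μ ((η / s) * s) ≤ σ * (η / s) * μ s := hμ_nm _ s hlam hs
    rw [div_mul_cancel₀ _ hs.ne'] at h1
    have h2 : σ * (η / s) * μ s ≤ σ * (1 + η / s) * μ s := by nlinarith [le_of_lt hlam]
    linarith

noncomputable def nu (μ : ℝ → ℝ) : ℝ → ℝ := fun x => if 0 < x then μ x else 0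

lemma nu_monotone {μ : ℝ → ℝ}
    (hμ_mono : ∀ x y : ℝ, 0 < x → x ≤ y → μ x ≤ μ y)
    (hμ_nonneg : ∀ x : ℝ, 0 < x → 0 ≤ μ x) : Monotone (nu μ) := by
  intro x y hxy
  unfold nu
  by_cases hx : 0 < x
  · rw [if_pos hx, if_pos (hx.trans_le hxy)]; exact hμ_mono x y hx hxy
  · rw [if_neg hx]
    by_cases hy : 0 < y
    · rw [if_pos hy]; exact hμ_nonneg y hy
    · rw [if_neg hy]

-- integrability of μ times a continuous function, on [0,1]
lemma mu_mul_intervalIntegrable {μ : ℝ → ℝ}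
    (hμ_mono : ∀ x y : ℝ, 0 < x → x ≤ y → μ x ≤ μ y)
    (hμ_nonneg : ∀ x : ℝ, 0 < x → 0 ≤ μ x)
    {h : ℝ → ℝ} (hh : ContinuousOn h (Set.uIcc (0:ℝ) 1)) :
    IntervalIntegrable (fun η => μ η * h η) volume 0 1 := by
  have h1 : IntervalIntegrable (fun η => nu μ η * h η) volume 0 1 :=
    (nu_monotone hμ_mono hμ_nonneg).intervalIntegrable.mul_continuousOn hh
  apply h1.congr_ae
  have hmeas : MeasurableSet (Ι (0:ℝ) 1) := measurableSet_uIoc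
  filter_upwards [ae_restrict_mem hmeas] with η hη
  rw [Set.uIoc_of_le (zero_le_one)] at hη
  simp only [nu, if_pos hη.1]

lemma integral_inv_sq_add {s : ℝ} (hs : 0 < s) :
    ∫ η in (0:ℝ)..1, (η ^ 2 + s ^ 2)⁻¹ ≤ π / (2 * s) := by
  have hderiv : ∀ x ∈ Set.uIcc (0:ℝ) 1,
      HasDerivAt (fun η => s⁻¹ * Real.arctan (η / s)) ((x ^ 2 + s ^ 2)⁻¹) x := by
    intro x _
    have h1 : HasDerivAt (fun η : ℝ => η / s) s⁻¹ x := by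
      simpa using (hasDerivAt_id x).div_const s
    have h2 := (Real.hasDerivAt_arctan (x / s)).comp x h1
    have h3 := h2.const_mul s⁻¹
    refine h3.congr_deriv ?_
    field_simp
    ring
  have hcont : Continuous (fun η : ℝ => (η ^ 2 + s ^ 2)⁻¹) := by
    apply Continuous.inv₀ (by continuity)
    intro x; positivity
  rw [intervalIntegral.integral_eq_sub_of_hasDerivAt hderiv (hcont.intervalIntegrable 0 1)]
  have := Real.arctan_lt_pi_div_two (1 / s)
  have hinv : 0 < s⁻¹ := inv_pos.2 hs
  calc s⁻¹ * Real.arctan (1 / s) - s⁻¹ * Real.arctan (0 / s)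
      = s⁻¹ * Real.arctan (1 / s) := by simp
    _ ≤ s⁻¹ * (π / 2) := by nlinarith
    _ = π / (2 * s) := by ring

lemma gFun_bound {σ : ℝ} {μ : ℝ → ℝ} (hσ : 1 ≤ σ)
    (hμ_mono : ∀ x y : ℝ, 0 < x → x ≤ y → μ x ≤ μ y)
    (hμ_nm : ∀ lam η : ℝ, 1 < lam → 0 < η → μ (lam * η) ≤ σ * lam * μ η)
    (hμ0 : Filter.Tendsto μ (nhdsWithin 0 (Set.Ioi 0)) (nhds 0))
    (t : ℂ) (ht : ‖t + 1‖ = 1) (ht0 : t ≠ 0) (hts : ‖t‖ ≤ 1) :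
    |gFun μ t| ≤ 24 * π * σ * μ (‖t‖) := by
  set s := ‖t‖ with hs_def
  have hs : 0 < s := norm_pos_iff.mpr ht0
  have hμs : 0 ≤ μ s := mu_nonneg hμ_mono hμ0 hs
  have hσ0 : 0 < σ := lt_of_lt_of_le one_pos hσ
  -- the bound function
  set b : ℝ → ℝ := fun η => 6 * σ * μ s * s * (η ^ 2 + s ^ 2)⁻¹ with hb_def
  have hbcont : Continuous b := by
    apply Continuous.mul continuous_const
    apply Continuous.inv₀ (by continuity)
    intro x; positivity
  have hbint : IntervalIntegrable b volume 0 1 := hbcont.intervalIntegrable 0 1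
  -- pointwise bound
  have hpt : ∀ᵐ η ∂(volume.restrict (Ι (0:ℝ) 1)),
      ‖μ η * ker t η * η‖ ≤ b η := by
    filter_upwards [ae_restrict_mem measurableSet_uIoc] with η hη
    rw [Set.uIoc_of_le zero_le_one] at hη
    obtain ⟨hη0, hη1⟩ := hη
    have hμη : 0 ≤ μ η := mu_nonneg hμ_mono hμ0 hη0
    have hq : 0 < η ^ 2 + s ^ 2 := by positivity
    have hden := denom_lower t ht hts η
    have hApos : 0 < ‖(η:ℂ) ^ 2 - t ^ 2‖ := lt_of_lt_of_le (by positivity) hden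
    have hAne : ((η:ℂ) ^ 2 - t ^ 2) ≠ 0 := by
      intro h; rw [h] at hApos; simp at hApos
    -- |ker| ≤ 4 s^2 / (η²+s²)²
    have hker : |ker t η| ≤ 4 * s ^ 2 / (η ^ 2 + s ^ 2) ^ 2 := by
      refine (ker_bound t η hAne).trans ?_
      have h1 : ((η ^ 2 + s ^ 2) / 2) ^ 2 ≤ ‖(η:ℂ) ^ 2 - t ^ 2‖ ^ 2 :=
        pow_le_pow_left₀ (by positivity) hden 2
      calc s ^ 2 / ‖(η:ℂ) ^ 2 - t ^ 2‖ ^ 2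
          ≤ s ^ 2 / ((η ^ 2 + s ^ 2) / 2) ^ 2 :=
            div_le_div_of_nonneg_left (by positivity) (by positivity) h1
        _ = 4 * s ^ 2 / (η ^ 2 + s ^ 2) ^ 2 := by field_simp; ring
    have hμstep : μ η ≤ σ * (1 + η / s) * μ s := mu_step hσ hμ_mono hμ_nm hμ0 hη0 hs
    have hstep2 : σ * (1 + η / s) * μ s * (4 * s ^ 2 / (η ^ 2 + s ^ 2) ^ 2) * η ≤ b η := by
      show σ * (1 + η / s) * μ s * (4 * s ^ 2 / (η ^ 2 + s ^ 2) ^ 2) * η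
          ≤ 6 * σ * μ s * s * (η ^ 2 + s ^ 2)⁻¹
      have hkey : 4 * (s + η) * η ≤ 6 * (η ^ 2 + s ^ 2) := by nlinarith [sq_nonneg (η - s)]
      have hrw : σ * (1 + η / s) * μ s * (4 * s ^ 2 / (η ^ 2 + s ^ 2) ^ 2) * η
          = σ * μ s * ((4 * (s + η) * η) * s) / (η ^ 2 + s ^ 2) ^ 2 := by
        field_simp
      have hrw2 : (6:ℝ) * σ * μ s * s * (η ^ 2 + s ^ 2)⁻¹
          = σ * μ s * ((6 * (η ^ 2 + s ^ 2)) * s) / (η ^ 2 + s ^ 2) ^ 2 := by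
        field_simp
      rw [hrw, hrw2]
      apply div_le_div_of_nonneg_right ?_ (by positivity)
      have h5 : (4 * (s + η) * η) * s ≤ (6 * (η ^ 2 + s ^ 2)) * s :=
        mul_le_mul_of_nonneg_right hkey hs.le
      nlinarith [mul_nonneg (mul_nonneg hσ0.le hμs) hs.le, h5,
        mul_le_mul_of_nonneg_left h5 (mul_nonneg hσ0.le hμs)]
    calc ‖μ η * ker t η * η‖ = μ η * |ker t η| * η := by
          rw [Real.norm_eq_abs, abs_mul, abs_mul, abs_of_nonneg hμη, abs_of_nonneg hη0.le]
      _ ≤ μ η * (4 * s ^ 2 / (η ^ 2 + s ^ 2) ^ 2) * η := by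
          apply mul_le_mul_of_nonneg_right _ hη0.le
          exact mul_le_mul_of_nonneg_left hker hμη
      _ ≤ σ * (1 + η / s) * μ s * (4 * s ^ 2 / (η ^ 2 + s ^ 2) ^ 2) * η := by
          apply mul_le_mul_of_nonneg_right _ hη0.le
          apply mul_le_mul_of_nonneg_right hμstep (by positivity)
      _ ≤ b η := hstep2
  -- conclude
  have hbound := intervalIntegral.norm_integral_le_abs_of_norm_le hpt hbint
  have hbval : ∫ η in (0:ℝ)..1, b η ≤ 3 * π * σ * μ s := by
    have : ∫ η in (0:ℝ)..1, b η
        = (6 * σ * μ s * s) * ∫ η in (0:ℝ)..1, (η ^ 2 + s ^ 2)⁻¹ := by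
      rw [hb_def, ← intervalIntegral.integral_const_mul]
    rw [this]
    have h2 := integral_inv_sq_add hs
    calc (6 * σ * μ s * s) * ∫ η in (0:ℝ)..1, (η ^ 2 + s ^ 2)⁻¹
        ≤ (6 * σ * μ s * s) * (π / (2 * s)) :=
          mul_le_mul_of_nonneg_left h2 (by positivity)
      _ = 3 * π * σ * μ s := by field_simp; ring
  have hbnonneg : 0 ≤ ∫ η in (0:ℝ)..1, b η := by
    apply intervalIntegral.integral_nonneg zero_le_one
    intro x _
    show 0 ≤ 6 * σ * μ s * s * (x ^ 2 + s ^ 2)⁻¹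
    positivity
  rw [gFun_eq, abs_mul, abs_of_nonneg (by norm_num : (0:ℝ) ≤ 8)]
  have : |∫ η in (0:ℝ)..1, μ η * ker t η * η| ≤ 3 * π * σ * μ s := by
    calc |∫ η in (0:ℝ)..1, μ η * ker t η * η| ≤ |∫ η in (0:ℝ)..1, b η| := hbound
      _ = ∫ η in (0:ℝ)..1, b η := abs_of_nonneg hbnonneg
      _ ≤ 3 * π * σ * μ s := hbval
  linarith

lemma ker_measurable (t : ℂ) : Measurable (ker t) := by
  have h1 : Continuous fun η : ℝ => (η : ℂ) ^ 2 - t ^ 2 :=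
    (Complex.continuous_ofReal.pow 2).sub continuous_const
  apply Measurable.div
  · measurability
  · exact ((continuous_norm.comp h1).pow 4).measurable

lemma integrand_aestronglyMeasurable {μ : ℝ → ℝ}
    (hμ_mono : ∀ x y : ℝ, 0 < x → x ≤ y → μ x ≤ μ y)
    (hμ_nonneg : ∀ x : ℝ, 0 < x → 0 ≤ μ x) (t : ℂ) :
    AEStronglyMeasurable (fun η => μ η * ker t η * η)
      (volume.restrict (Ι (0:ℝ) 1)) := by
  have h1 : Measurable (fun η => nu μ η * ker t η * η) :=
    (((nu_monotone hμ_mono hμ_nonneg).measurable).mul (ker_measurable t)).mul measurable_id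
  apply h1.aestronglyMeasurable.congr
  filter_upwards [ae_restrict_mem measurableSet_uIoc] with η hη
  rw [Set.uIoc_of_le zero_le_one] at hη
  simp only [nu, if_pos hη.1]

lemma gFun_zero (μ : ℝ → ℝ) : gFun μ 0 = 0 := by
  rw [gFun_eq]
  have : ∀ η : ℝ, ker 0 η = 0 := by
    intro η
    unfold ker
    simp
  simp only [this, mul_zero, zero_mul, intervalIntegral.integral_zero]

lemma gFun_contWithinAt_zero {σ : ℝ} {μ : ℝ → ℝ} (hσ : 1 ≤ σ)
    (hμ_mono : ∀ x y : ℝ, 0 < x → x ≤ y → μ x ≤ μ y)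
    (hμ_nm : ∀ lam η : ℝ, 1 < lam → 0 < η → μ (lam * η) ≤ σ * lam * μ η)
    (hμ0 : Filter.Tendsto μ (nhdsWithin 0 (Set.Ioi 0)) (nhds 0)) :
    ContinuousWithinAt (gFun μ) {z : ℂ | ‖z + 1‖ = 1} 0 := by
  rw [Metric.continuousWithinAt_iff]
  intro ε hε
  have hσ0 : 0 < σ := lt_of_lt_of_le one_pos hσ
  have hK : 0 < 24 * π * σ := by positivity
  have hε' : 0 < ε / (24 * π * σ + 1) := by positivity
  obtain ⟨δ₁, hδ₁, hδ⟩ := (Metric.tendsto_nhdsWithin_nhds).1 hμ0 _ hε'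
  refine ⟨min δ₁ 1, by positivity, ?_⟩
  intro y hy hdy
  rcases eq_or_ne y 0 with rfl | hy0
  · simpa using hε
  · have habs : ‖y‖ = dist y 0 := by
      rw [Complex.dist_eq]; simp
    have h1 : ‖y‖ ≤ 1 := by
      rw [habs]; exact le_of_lt (lt_of_lt_of_le hdy (min_le_right _ _))
    have h2 : dist (‖y‖) 0 < δ₁ := by
      rw [Real.dist_eq, sub_zero, abs_of_nonneg (norm_nonneg y), habs]
      exact lt_of_lt_of_le hdy (min_le_left _ _)
    have h3 := hδ (Set.mem_Ioi.2 (norm_pos_iff.mpr hy0)) h2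
    rw [Real.dist_eq, sub_zero] at h3
    have h4 := gFun_bound hσ hμ_mono hμ_nm hμ0 y hy hy0 h1
    have h5 : μ (‖y‖) ≤ |μ (‖y‖)| := le_abs_self _
    rw [Real.dist_eq, gFun_zero, sub_zero]
    calc |gFun μ y| ≤ 24 * π * σ * μ (‖y‖) := h4
      _ ≤ 24 * π * σ * |μ (‖y‖)| := by nlinarith
      _ < 24 * π * σ * (ε / (24 * π * σ + 1)) := by
          exact mul_lt_mul_of_pos_left h3 hK
      _ ≤ ε := by
          rw [mul_div_assoc']
          rw [div_le_iff₀ (by positivity)]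
          nlinarith

lemma gFun_contWithinAt_ne {μ : ℝ → ℝ}
    (hμ_mono : ∀ x y : ℝ, 0 < x → x ≤ y → μ x ≤ μ y)
    (hμ0 : Filter.Tendsto μ (nhdsWithin 0 (Set.Ioi 0)) (nhds 0))
    (t₀ : ℂ) (ht₀ : ‖t₀ + 1‖ = 1) (ht₀0 : t₀ ≠ 0) :
    ContinuousWithinAt (gFun μ) {z : ℂ | ‖z + 1‖ = 1} t₀ := by
  have hμ_nonneg : ∀ x : ℝ, 0 < x → 0 ≤ μ x := fun x hx => mu_nonneg hμ_mono hμ0 hx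
  have hμ1 : 0 ≤ μ 1 := hμ_nonneg 1 one_pos
  -- lower bound for the denominator at t₀
  have hfc : Continuous fun η : ℝ => ‖(η : ℂ) ^ 2 - t₀ ^ 2‖ :=
    continuous_norm.comp ((Complex.continuous_ofReal.pow 2).sub continuous_const)
  obtain ⟨η₀, hη₀, hmin'⟩ := isCompact_Icc.exists_isMinOn (Set.nonempty_Icc.2 zero_le_one)
    hfc.continuousOn
  have hmin : ∀ η ∈ Set.Icc (0:ℝ) 1, ‖(η₀ : ℂ) ^ 2 - t₀ ^ 2‖
      ≤ ‖(η : ℂ) ^ 2 - t₀ ^ 2‖ := fun η hη => hmin' hη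
  set bb := ‖(η₀ : ℂ) ^ 2 - t₀ ^ 2‖ with hbb_def
  have hbb : 0 < bb := norm_pos_iff.mpr (denom_ne_zero t₀ ht₀ ht₀0 η₀ hη₀)
  set r := min 1 (bb / (2 * (2 * ‖t₀‖ + 1))) with hr_def
  have hr : 0 < r := by
    apply lt_min one_pos
    positivity
  -- denominators stay bounded below on the ball
  have hlow : ∀ t : ℂ, dist t t₀ < r → ∀ η ∈ Set.Icc (0:ℝ) 1,
      bb / 2 ≤ ‖(η : ℂ) ^ 2 - t ^ 2‖ := by
    intro t htr η hη
    have h1 : ‖t ^ 2 - t₀ ^ 2‖ ≤ dist t t₀ * (2 * ‖t₀‖ + 1) := by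
      have : t ^ 2 - t₀ ^ 2 = (t - t₀) * (t + t₀) := by ring
      rw [this, norm_mul]
      have h2 : ‖t - t₀‖ = dist t t₀ := (Complex.dist_eq t t₀).symm
      have h3 : ‖t + t₀‖ ≤ 2 * ‖t₀‖ + 1 := by
        calc ‖t + t₀‖ = ‖(t - t₀) + 2 * t₀‖ := by ring_nf
          _ ≤ ‖t - t₀‖ + ‖2 * t₀‖ := norm_add_le _ _
          _ ≤ 1 + 2 * ‖t₀‖ := by
              rw [h2]
              have : dist t t₀ ≤ 1 := le_of_lt (lt_of_lt_of_le htr (min_le_left _ _))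
              simp [map_mul]
              linarith [this]
          _ = 2 * ‖t₀‖ + 1 := by ring
      rw [h2]
      exact mul_le_mul_of_nonneg_left h3 dist_nonneg
    have h4 : dist t t₀ * (2 * ‖t₀‖ + 1) ≤ bb / 2 := by
      have h5 : dist t t₀ ≤ bb / (2 * (2 * ‖t₀‖ + 1)) :=
        le_of_lt (lt_of_lt_of_le htr (min_le_right _ _))
      calc dist t t₀ * (2 * ‖t₀‖ + 1) ≤ bb / (2 * (2 * ‖t₀‖ + 1)) * (2 * ‖t₀‖ + 1) :=
            mul_le_mul_of_nonneg_right h5 (by positivity)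
        _ = bb / 2 := by field_simp
    have h6 : bb ≤ ‖(η : ℂ) ^ 2 - t₀ ^ 2‖ := hmin η hη
    calc bb / 2 = bb - bb / 2 := by ring
      _ ≤ ‖(η : ℂ) ^ 2 - t₀ ^ 2‖ - ‖t ^ 2 - t₀ ^ 2‖ := by
          have := h1.trans h4
          linarith
      _ ≤ ‖(η : ℂ) ^ 2 - t ^ 2‖ := by
          have h7 : ‖(η : ℂ) ^ 2 - t₀ ^ 2‖
              ≤ ‖(η : ℂ) ^ 2 - t ^ 2‖ + ‖t ^ 2 - t₀ ^ 2‖ := by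
            calc ‖(η : ℂ) ^ 2 - t₀ ^ 2‖
                = ‖((η : ℂ) ^ 2 - t ^ 2) + (t ^ 2 - t₀ ^ 2)‖ := by ring_nf
              _ ≤ _ := norm_add_le _ _
          linarith
  -- dominated convergence
  have hfe : gFun μ = fun t => 8 * ∫ η in (0:ℝ)..1, μ η * ker t η * η := funext (gFun_eq μ)
  rw [hfe]
  apply ContinuousWithinAt.mul continuousWithinAt_const
  set C : ℝ := μ 1 * ((‖t₀‖ + 1) ^ 2 / (bb / 2) ^ 2) with hC_def
  apply intervalIntegral.continuousWithinAt_of_dominated_interval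
    (bound := fun _ => C)
  · exact Filter.Eventually.of_forall
      (fun t => integrand_aestronglyMeasurable hμ_mono hμ_nonneg t)
  · filter_upwards [mem_nhdsWithin_of_mem_nhds (Metric.ball_mem_nhds t₀ hr)] with t htb
    apply Filter.Eventually.of_forall
    intro η hη
    rw [Set.uIoc_of_le zero_le_one] at hη
    obtain ⟨hη0, hη1⟩ := hη
    have hμη : 0 ≤ μ η := hμ_nonneg η hη0
    have htr : dist t t₀ < r := Metric.mem_ball.1 htb
    have hA : bb / 2 ≤ ‖(η : ℂ) ^ 2 - t ^ 2‖ :=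
      hlow t htr η ⟨hη0.le, hη1⟩
    have hApos : 0 < ‖(η : ℂ) ^ 2 - t ^ 2‖ := lt_of_lt_of_le (by positivity) hA
    have hAne : ((η : ℂ) ^ 2 - t ^ 2) ≠ 0 := by
      intro h; rw [h] at hApos; simp at hApos
    have habs_t : ‖t‖ ≤ ‖t₀‖ + 1 := by
      have h1 : ‖t - t₀‖ = dist t t₀ := (Complex.dist_eq t t₀).symm
      have h2 : dist t t₀ ≤ 1 := le_of_lt (lt_of_lt_of_le htr (min_le_left _ _))
      calc ‖t‖ = ‖t₀ + (t - t₀)‖ := by ring_nf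
        _ ≤ ‖t₀‖ + ‖t - t₀‖ := norm_add_le _ _
        _ ≤ ‖t₀‖ + 1 := by rw [h1]; linarith
    have hker : |ker t η| ≤ (‖t₀‖ + 1) ^ 2 / (bb / 2) ^ 2 := by
      refine (ker_bound t η hAne).trans ?_
      apply div_le_div₀ (by positivity)
      · exact pow_le_pow_left₀ (norm_nonneg t) habs_t 2
      · positivity
      · exact pow_le_pow_left₀ (by positivity) hA 2
    calc ‖μ η * ker t η * η‖ = μ η * |ker t η| * η := by
          rw [Real.norm_eq_abs, abs_mul, abs_mul, abs_of_nonneg hμη, abs_of_nonneg hη0.le]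
      _ ≤ μ 1 * ((‖t₀‖ + 1) ^ 2 / (bb / 2) ^ 2) * 1 := by
          apply mul_le_mul _ hη1 hη0.le (by positivity)
          exact mul_le_mul (hμ_mono η 1 hη0 hη1) hker (abs_nonneg _) hμ1
      _ = C := by rw [hC_def]; ring
  · exact intervalIntegrable_const
  · apply Filter.Eventually.of_forall
    intro η hη
    rw [Set.uIoc_of_le zero_le_one] at hη
    apply ContinuousAt.continuousWithinAt
    have hApos : 0 < ‖(η : ℂ) ^ 2 - t₀ ^ 2‖ :=
      lt_of_lt_of_le hbb (hmin η ⟨hη.1.le, hη.2⟩)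
    have habs : Continuous fun t : ℂ => ‖t‖ := continuous_norm
    have hnum : Continuous fun t : ℂ =>
        ((t.re ^ 2 - t.im ^ 2) * (η ^ 4 + ‖t‖ ^ 4)
          - 2 * η ^ 2 * ‖t‖ ^ 4) :=
      (((Complex.continuous_re.pow 2).sub (Complex.continuous_im.pow 2)).mul
        (continuous_const.add (habs.pow 4))).sub (continuous_const.mul (habs.pow 4))
    have hden : Continuous fun t : ℂ => ‖(η : ℂ) ^ 2 - t ^ 2‖ ^ 4 :=
      (continuous_norm.comp (continuous_const.sub (continuous_pow 2))).pow 4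
    have hdne : ‖(η : ℂ) ^ 2 - t₀ ^ 2‖ ^ 4 ≠ 0 := by positivity
    have hkerC : ContinuousAt (fun t => ker t η) t₀ :=
      ContinuousAt.div hnum.continuousAt hden.continuousAt hdne
    exact (continuousAt_const.mul hkerC).mul continuousAt_const



noncomputable def pker (w : ℂ) (θ : ℝ) : ℝ :=
  (1 - ‖w‖ ^ 2) / ‖circleMap 0 1 θ - w‖ ^ 2

lemma re_intervalIntegral {f : ℝ → ℂ} {a b : ℝ} (hf : IntervalIntegrable f volume a b) :
    (∫ x in a..b, f x).re = ∫ x in a..b, (f x).re := by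
  have := Complex.reCLM.intervalIntegral_comp_comm hf
  simpa using this.symm

lemma circleMap_ne (w : ℂ) (hw : ‖w‖ < 1) (θ : ℝ) : circleMap 0 1 θ - w ≠ 0 := by
  intro h
  have h1 : ‖circleMap 0 1 θ‖ = 1 := by simp [circleMap]
  have : circleMap 0 1 θ = w := by linear_combination h
  rw [this] at h1; rw [h1] at hw; exact lt_irrefl 1 hw

lemma pker_nonneg (w : ℂ) (hw : ‖w‖ < 1) (θ : ℝ) : 0 ≤ pker w θ := by
  unfold pker
  apply div_nonneg _ (by positivity)
  nlinarith [norm_nonneg w]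

lemma re_cauchy_kernel (w : ℂ) (hw : ‖w‖ < 1) (θ : ℝ) :
    (circleMap 0 1 θ / (circleMap 0 1 θ - w)).re = 1 / 2 + pker w θ / 2 := by
  set u := circleMap 0 1 θ with hu
  have h1 : ‖u‖ = 1 := by simp [hu, circleMap]
  have hne : u - w ≠ 0 := circleMap_ne w hw θ
  have habs : u.re ^ 2 + u.im ^ 2 = 1 := by rw [abs_sq_eq, h1]; norm_num
  unfold pker
  rw [← hu, Complex.div_re]
  rw [show ‖w‖ ^ 2 = w.re ^ 2 + w.im ^ 2 from (abs_sq_eq w).symm]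
  rw [show ‖u - w‖ ^ 2 = (u.re - w.re) ^ 2 + (u.im - w.im) ^ 2 by
    rw [← abs_sq_eq]; simp [Complex.sub_re, Complex.sub_im] ]
  have hQ : (u.re - w.re) ^ 2 + (u.im - w.im) ^ 2 ≠ 0 := by
    intro h
    apply hne
    have h1' : u.re - w.re = 0 := by nlinarith [sq_nonneg (u.re - w.re), sq_nonneg (u.im - w.im)]
    have h2' : u.im - w.im = 0 := by nlinarith [sq_nonneg (u.re - w.re), sq_nonneg (u.im - w.im)]
    apply Complex.ext <;> simp [Complex.sub_re, Complex.sub_im] <;> linarith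
  have hQ2 : Complex.normSq (u - w) = (u.re - w.re) ^ 2 + (u.im - w.im) ^ 2 := by
    simp [Complex.normSq_apply, Complex.sub_re, Complex.sub_im]; ring
  rw [hQ2]
  simp only [Complex.sub_re, Complex.sub_im]
  field_simp
  linear_combination habs

lemma cauchy_kernel_integrable (w : ℂ) (hw : ‖w‖ < 1) :
    IntervalIntegrable (fun θ => circleMap 0 1 θ / (circleMap 0 1 θ - w)) volume 0 (2 * π) := by
  apply Continuous.intervalIntegrable
  exact (continuous_circleMap 0 1).div ((continuous_circleMap 0 1).sub continuous_const)
    (fun θ => circleMap_ne w hw θ)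

lemma integral_cauchy_kernel (w : ℂ) (hw : ‖w‖ < 1) :
    ∫ θ in (0:ℝ)..(2 * π), circleMap 0 1 θ / (circleMap 0 1 θ - w) = 2 * π := by
  have h := circleIntegral.integral_sub_inv_of_mem_ball (c := 0) (R := 1) (w := w)
    (by simpa [Complex.dist_eq] using hw)
  rw [circleIntegral] at h
  simp only [deriv_circleMap] at h
  have heq : ∀ θ : ℝ, (circleMap 0 1 θ * Complex.I) • (circleMap 0 1 θ - w)⁻¹
      = Complex.I * (circleMap 0 1 θ / (circleMap 0 1 θ - w)) := by
    intro θ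
    simp [smul_eq_mul, div_eq_mul_inv]
    ring
  rw [intervalIntegral.integral_congr (fun θ _ => heq θ)] at h
  rw [intervalIntegral.integral_const_mul] at h
  have hI : (Complex.I : ℂ) ≠ 0 := Complex.I_ne_zero
  have h2 : Complex.I * ∫ θ in (0:ℝ)..(2 * π), circleMap 0 1 θ / (circleMap 0 1 θ - w)
      = Complex.I * (2 * π) := by rw [h]; ring
  exact mul_left_cancel₀ hI h2

lemma pker_continuous (w : ℂ) (hw : ‖w‖ < 1) : Continuous (pker w) := by
  unfold pker
  apply Continuous.div continuous_const
  · exact (continuous_norm.comp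
      ((continuous_circleMap 0 1).sub continuous_const)).pow 2
  · intro θ
    exact pow_ne_zero 2 (norm_ne_zero_iff.mpr (circleMap_ne w hw θ))

lemma integral_pker (w : ℂ) (hw : ‖w‖ < 1) :
    ∫ θ in (0:ℝ)..(2 * π), pker w θ = 2 * π := by
  have h1 := integral_cauchy_kernel w hw
  have h2 : (∫ θ in (0:ℝ)..(2 * π), circleMap 0 1 θ / (circleMap 0 1 θ - w)).re
      = ∫ θ in (0:ℝ)..(2 * π), (circleMap 0 1 θ / (circleMap 0 1 θ - w)).re :=
    re_intervalIntegral (cauchy_kernel_integrable w hw)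
  rw [h1] at h2
  simp only [re_cauchy_kernel w hw] at h2
  have h3 : IntervalIntegrable (fun _ : ℝ => (1:ℝ) / 2) volume 0 (2 * π) :=
    intervalIntegrable_const
  have h4 : IntervalIntegrable (fun θ => pker w θ / 2) volume 0 (2 * π) :=
    ((pker_continuous w hw).div_const 2).intervalIntegrable 0 (2 * π)
  rw [intervalIntegral.integral_add h3 h4] at h2
  simp only [intervalIntegral.integral_div, intervalIntegral.integral_const] at h2
  rw [show ((2:ℂ) * ↑π).re = 2 * π by norm_num] at h2
  simp only [smul_eq_mul] at h2
  linarith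

lemma poisson_boundary_est (gc : ℝ → ℝ) (hgc : Continuous gc) (B : ℝ) (hB : ∀ θ, |gc θ| ≤ B)
    (gb : ℝ) (hgb : |gb| ≤ B) (w₀ : ℂ)
    (ε' δ₁ : ℝ) (hε' : 0 < ε') (hδ₁ : 0 < δ₁)
    (hnear : ∀ θ : ℝ, ‖circleMap 0 1 θ - w₀‖ < δ₁ → |gc θ - gb| ≤ ε')
    (w : ℂ) (hw : ‖w‖ < 1) :
    |(∫ θ in (0:ℝ)..(2*π), gc θ * pker w θ) - 2*π*gb|
      ≤ 2*π*ε' + (2*B/δ₁^2) * (4*π*(1 - ‖w‖ ^ 2)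
          + 4*π*‖w - w₀‖^2) := by
  have hB0 : 0 ≤ B := (abs_nonneg (gc 0)).trans (hB 0)
  have hw2 : 0 ≤ 1 - ‖w‖ ^ 2 := by nlinarith [norm_nonneg w]
  have hPc := pker_continuous w hw
  have hPint : IntervalIntegrable (pker w) volume 0 (2*π) := hPc.intervalIntegrable 0 (2*π)
  have hgcPint : IntervalIntegrable (fun θ => gc θ * pker w θ) volume 0 (2*π) :=
    (hgc.mul hPc).intervalIntegrable 0 (2*π)
  have hP := integral_pker w hw
  -- rewrite the difference as a single integral
  have hdiff : (∫ θ in (0:ℝ)..(2*π), gc θ * pker w θ) - 2*π*gb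
      = ∫ θ in (0:ℝ)..(2*π), (gc θ - gb) * pker w θ := by
    have : ∀ θ : ℝ, (gc θ - gb) * pker w θ = gc θ * pker w θ - gb * pker w θ := by
      intro θ; ring
    rw [intervalIntegral.integral_congr (fun θ _ => this θ),
      intervalIntegral.integral_sub hgcPint (hPint.const_mul gb),
      intervalIntegral.integral_const_mul, hP]
    ring
  rw [hdiff]
  -- the bound function
  set C : ℝ := 2 * B / δ₁ ^ 2 with hC_def
  have hC0 : 0 ≤ C := by positivity
  set b : ℝ → ℝ := fun θ => ε' * pker w θ
      + (C * (2 * (1 - ‖w‖ ^ 2)) + C * (2 * ‖w - w₀‖ ^ 2) * pker w θ)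
    with hb_def
  have hbint : IntervalIntegrable b volume 0 (2*π) :=
    ((hPint.const_mul ε').add
      (intervalIntegrable_const.add (hPint.const_mul _)))
  have hpt : ∀ᵐ θ ∂(volume.restrict (Ι (0:ℝ) (2*π))), ‖(gc θ - gb) * pker w θ‖ ≤ b θ := by
    apply Filter.Eventually.of_forall
    intro θ
    have hP0 : 0 ≤ pker w θ := pker_nonneg w hw θ
    have huw : ‖circleMap 0 1 θ - w‖ ≠ 0 :=
      norm_ne_zero_iff.mpr (circleMap_ne w hw θ)
    have hPval : ‖circleMap 0 1 θ - w‖ ^ 2 * pker w θ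
        = 1 - ‖w‖ ^ 2 := by
      unfold pker
      field_simp
    have hsq : ‖circleMap 0 1 θ - w₀‖ ^ 2
        ≤ 2 * ‖circleMap 0 1 θ - w‖ ^ 2 + 2 * ‖w - w₀‖ ^ 2 := by
      have htri : ‖circleMap 0 1 θ - w₀‖
          ≤ ‖circleMap 0 1 θ - w‖ + ‖w - w₀‖ := by
        calc ‖circleMap 0 1 θ - w₀‖
            = ‖(circleMap 0 1 θ - w) + (w - w₀)‖ := by ring_nf
          _ ≤ _ := norm_add_le _ _
      nlinarith [norm_nonneg (circleMap 0 1 θ - w₀),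
        norm_nonneg (circleMap 0 1 θ - w), norm_nonneg (w - w₀),
        sq_nonneg (‖circleMap 0 1 θ - w‖ - ‖w - w₀‖)]
    rw [Real.norm_eq_abs, abs_mul, abs_of_nonneg hP0]
    rcases lt_or_ge (‖circleMap 0 1 θ - w₀‖) δ₁ with hc | hc
    · have h1 := hnear θ hc
      have h2 : |gc θ - gb| * pker w θ ≤ ε' * pker w θ :=
        mul_le_mul_of_nonneg_right h1 hP0
      have h3 : 0 ≤ C * (2 * (1 - ‖w‖ ^ 2))
          + C * (2 * ‖w - w₀‖ ^ 2) * pker w θ := by positivity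
      rw [hb_def]
      dsimp only
      linarith
    · have h1 : |gc θ - gb| ≤ 2 * B := by
        calc |gc θ - gb| ≤ |gc θ| + |gb| := abs_sub _ _
          _ ≤ 2 * B := by linarith [hB θ]
      have h2 : 2 * B ≤ C * ‖circleMap 0 1 θ - w₀‖ ^ 2 := by
        rw [hC_def]
        rw [div_mul_eq_mul_div, le_div_iff₀ (by positivity)]
        have : δ₁ ^ 2 ≤ ‖circleMap 0 1 θ - w₀‖ ^ 2 :=
          pow_le_pow_left₀ hδ₁.le hc 2
        nlinarith
      have h3 : |gc θ - gb| * pker w θ ≤ C * (‖circleMap 0 1 θ - w₀‖ ^ 2 * pker w θ) := by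
        rw [← mul_assoc]
        exact mul_le_mul_of_nonneg_right (h1.trans h2) hP0
      have h4 : ‖circleMap 0 1 θ - w₀‖ ^ 2 * pker w θ
          ≤ 2 * (1 - ‖w‖ ^ 2) + 2 * ‖w - w₀‖ ^ 2 * pker w θ := by
        calc ‖circleMap 0 1 θ - w₀‖ ^ 2 * pker w θ
            ≤ (2 * ‖circleMap 0 1 θ - w‖ ^ 2 + 2 * ‖w - w₀‖ ^ 2)
              * pker w θ := mul_le_mul_of_nonneg_right hsq hP0
          _ = 2 * (‖circleMap 0 1 θ - w‖ ^ 2 * pker w θ)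
              + 2 * ‖w - w₀‖ ^ 2 * pker w θ := by ring
          _ = 2 * (1 - ‖w‖ ^ 2) + 2 * ‖w - w₀‖ ^ 2 * pker w θ := by
              rw [hPval]
      have h5 : C * (‖circleMap 0 1 θ - w₀‖ ^ 2 * pker w θ)
          ≤ C * (2 * (1 - ‖w‖ ^ 2)) + C * (2 * ‖w - w₀‖ ^ 2) * pker w θ := by
        have := mul_le_mul_of_nonneg_left h4 hC0
        calc C * (‖circleMap 0 1 θ - w₀‖ ^ 2 * pker w θ)
            ≤ C * (2 * (1 - ‖w‖ ^ 2) + 2 * ‖w - w₀‖ ^ 2 * pker w θ) := this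
          _ = C * (2 * (1 - ‖w‖ ^ 2)) + C * (2 * ‖w - w₀‖ ^ 2) * pker w θ := by
              ring
      rw [hb_def]
      dsimp only
      have h6 : 0 ≤ ε' * pker w θ := by positivity
      linarith [h3.trans h5]
  have hle := intervalIntegral.norm_integral_le_abs_of_norm_le hpt hbint
  rw [Real.norm_eq_abs] at hle
  refine hle.trans ?_
  have hbval : ∫ θ in (0:ℝ)..(2*π), b θ
      = ε' * (2*π) + (C * (2 * (1 - ‖w‖ ^ 2)) * (2*π)
        + C * (2 * ‖w - w₀‖ ^ 2) * (2*π)) := by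
    have h1 : ∫ θ in (0:ℝ)..(2*π), ε' * pker w θ = ε' * (2*π) := by
      rw [intervalIntegral.integral_const_mul, hP]
    have h2 : ∫ _θ in (0:ℝ)..(2*π), C * (2 * (1 - ‖w‖ ^ 2))
        = C * (2 * (1 - ‖w‖ ^ 2)) * (2*π) := by
      rw [intervalIntegral.integral_const, smul_eq_mul]
      ring
    have h3 : ∫ θ in (0:ℝ)..(2*π), C * (2 * ‖w - w₀‖ ^ 2) * pker w θ
        = C * (2 * ‖w - w₀‖ ^ 2) * (2*π) := by
      rw [intervalIntegral.integral_const_mul, hP]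
    rw [hb_def]
    rw [intervalIntegral.integral_add ((hPint.const_mul ε'))
      (intervalIntegrable_const.add (hPint.const_mul _)),
      intervalIntegral.integral_add intervalIntegrable_const (hPint.const_mul _),
      h1, h2, h3]
  have hbnn : 0 ≤ ∫ θ in (0:ℝ)..(2*π), b θ := by
    apply intervalIntegral.integral_nonneg (by positivity)
    intro θ _
    rw [hb_def]
    dsimp only
    have hP0 : 0 ≤ pker w θ := pker_nonneg w hw θ
    positivity
  rw [abs_of_nonneg hbnn, hbval]
  have h7 : 0 ≤ ‖w - w₀‖ ^ 2 := by positivity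
  rw [hC_def]
  ring_nf
  nlinarith [pi_pos, hε', hC0]

/-- The Cauchy-type integral `g̃(z) = (1/(2πi))·∮_γ g(t)/(t − z) dt` along the circle of
center `−1` and radius `1`. -/
noncomputable def cauchyTypeIntegral (g : ℂ → ℝ) (z : ℂ) : ℂ :=
  (2 * Real.pi * Complex.I)⁻¹ * ∮ t in C(-1, 1), (g t : ℂ) / (t - z)

lemma cauchy_re_formula (g : ℂ → ℝ)
    (hg : Continuous (fun θ : ℝ => g (circleMap (-1) 1 θ)))
    (z : ℂ) (hz : ‖z + 1‖ < 1) :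
    (cauchyTypeIntegral g z).re
      = (4*π)⁻¹ * (∫ θ in (0:ℝ)..(2*π), g (circleMap (-1) 1 θ))
        + (4*π)⁻¹ * ∫ θ in (0:ℝ)..(2*π), g (circleMap (-1) 1 θ) * pker (z+1) θ := by
  set w := z + 1 with hw_def
  have hw : ‖w‖ < 1 := hz
  have hKcont : Continuous (fun θ : ℝ => circleMap 0 1 θ / (circleMap 0 1 θ - w)) :=
    (continuous_circleMap 0 1).div ((continuous_circleMap 0 1).sub continuous_const)
      (fun θ => circleMap_ne w hw θ)
  have hXint : IntervalIntegrable
      (fun θ : ℝ => (g (circleMap (-1) 1 θ) : ℂ) * (circleMap 0 1 θ / (circleMap 0 1 θ - w)))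
      volume 0 (2*π) :=
    ((Complex.continuous_ofReal.comp hg).mul hKcont).intervalIntegrable 0 (2*π)
  have hstep : cauchyTypeIntegral g z
      = ((2*π : ℝ) : ℂ)⁻¹ * ∫ θ in (0:ℝ)..(2*π),
          (g (circleMap (-1) 1 θ) : ℂ) * (circleMap 0 1 θ / (circleMap 0 1 θ - w)) := by
    unfold cauchyTypeIntegral circleIntegral
    simp only [deriv_circleMap]
    have heq : ∀ θ : ℝ, (circleMap 0 1 θ * Complex.I) •
        ((g (circleMap (-1) 1 θ) : ℂ) / (circleMap (-1) 1 θ - z))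
        = Complex.I * ((g (circleMap (-1) 1 θ) : ℂ)
            * (circleMap 0 1 θ / (circleMap 0 1 θ - w))) := by
      intro θ
      have hsub : circleMap (-1) 1 θ - z = circleMap 0 1 θ - w := by
        simp [circleMap, hw_def]; ring
      rw [smul_eq_mul, hsub]
      simp only [div_eq_mul_inv]
      ring
    rw [intervalIntegral.integral_congr (fun θ _ => heq θ),
      intervalIntegral.integral_const_mul]
    rw [← mul_assoc]
    congr 1
    have hπ : (π : ℝ) ≠ 0 := Real.pi_ne_zero
    have hI : (Complex.I : ℂ) ≠ 0 := Complex.I_ne_zero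
    push_cast
    field_simp
  rw [hstep, ← Complex.ofReal_inv, Complex.re_ofReal_mul,
    re_intervalIntegral hXint]
  have hre : ∀ θ : ℝ, ((g (circleMap (-1) 1 θ) : ℂ)
      * (circleMap 0 1 θ / (circleMap 0 1 θ - w))).re
      = g (circleMap (-1) 1 θ) / 2 + g (circleMap (-1) 1 θ) * pker w θ / 2 := by
    intro θ
    rw [Complex.re_ofReal_mul, re_cauchy_kernel w hw θ]
    ring
  rw [intervalIntegral.integral_congr (fun θ _ => hre θ)]
  have hPc := pker_continuous w hw
  rw [intervalIntegral.integral_add (f := fun θ => g (circleMap (-1) 1 θ) / 2)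
    (g := fun θ => g (circleMap (-1) 1 θ) * pker w θ / 2)
    ((hg.div_const 2).intervalIntegrable 0 (2*π))
    (((hg.mul hPc).div_const 2).intervalIntegrable 0 (2*π)),
    intervalIntegral.integral_div, intervalIntegral.integral_div]
  have key : ∀ A B : ℝ, (2*π)⁻¹ * (A/2 + B/2) = (4*π)⁻¹*A + (4*π)⁻¹*B := by
    intro A B
    ring
  exact key _ _


lemma four_pi_id1 (Mv X g : ℝ) :
    (4*π)⁻¹*Mv + (4*π)⁻¹*X - ((4*π)⁻¹*Mv + 1/2*g) = (4*π)⁻¹*(X - 2*π*g) := by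
  have hπ : (π:ℝ) ≠ 0 := Real.pi_ne_zero
  field_simp
  ring

lemma four_pi_id2 (ε B δ₁ d : ℝ) (hδ : δ₁ ≠ 0) :
    (4*π)⁻¹ * (2*π*(ε/2) + (2*B/δ₁^2)*(4*π*(3*d))) = ε/4 + (6*B/δ₁^2)*d := by
  have hπ : (π:ℝ) ≠ 0 := Real.pi_ne_zero
  field_simp
  ring

lemma div_step (B δ₁ ε d : ℝ) (hδ : 0 < δ₁) (hB : 0 ≤ B) (hd : 0 ≤ d)
    (hd1 : d ≤ ε * δ₁^2/(12*B+1)) (hε : 0 < ε) : (6*B/δ₁^2) * d < ε/2 := by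
  have h1 : (6*B/δ₁^2) * d ≤ (6*B/δ₁^2)*(ε*δ₁^2/(12*B+1)) :=
    mul_le_mul_of_nonneg_left hd1 (by positivity)
  have h2 : (6*B/δ₁^2)*(ε*δ₁^2/(12*B+1)) = 6*B*ε/(12*B+1) := by
    field_simp
  have h3 : 6*B*ε/(12*B+1) < ε/2 := by
    rw [div_lt_iff₀ (by positivity)]
    nlinarith
  linarith

lemma gFun_continuousOn {σ : ℝ} {μ : ℝ → ℝ} (hσ : 1 ≤ σ)
    (hμ_mono : ∀ x y : ℝ, 0 < x → x ≤ y → μ x ≤ μ y)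
    (hμ_nm : ∀ lam η : ℝ, 1 < lam → 0 < η → μ (lam * η) ≤ σ * lam * μ η)
    (hμ0 : Filter.Tendsto μ (nhdsWithin 0 (Set.Ioi 0)) (nhds 0)) :
    ContinuousOn (gFun μ) {z : ℂ | ‖z + 1‖ = 1} := by
  intro t ht
  rcases eq_or_ne t 0 with rfl | h
  · exact gFun_contWithinAt_zero hσ hμ_mono hμ_nm hμ0
  · exact gFun_contWithinAt_ne hμ_mono hμ0 t ht h

/-- For a normal majorant `μ` of class `(σ,1)` with `μ(0⁺) = 0` and density
`g = gFun μ`, the real part of the Cauchy-type integral extends continuously to the closed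
disk `{z : |z+1| ≤ 1}`. -/
theorem re_cauchyType_continuous_extension_interior
    (σ : ℝ) (hσ : 1 ≤ σ) (μ : ℝ → ℝ)
    (hμ_mono : ∀ x y : ℝ, 0 < x → x ≤ y → μ x ≤ μ y)
    (hμ_nm : ∀ lam η : ℝ, 1 < lam → 0 < η → μ (lam * η) ≤ σ * lam * μ η)
    (hμ0 : Filter.Tendsto μ (nhdsWithin 0 (Set.Ioi 0)) (nhds 0)) :
    ∃ F : ℂ → ℝ, ContinuousOn F {z : ℂ | ‖z + 1‖ ≤ 1} ∧
      ∀ z : ℂ, ‖z + 1‖ < 1 → F z = (cauchyTypeIntegral (gFun μ) z).re := by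
  set S : Set ℂ := {z : ℂ | ‖z + 1‖ = 1} with hS_def
  have hgS : ContinuousOn (gFun μ) S := gFun_continuousOn hσ hμ_mono hμ_nm hμ0
  have hmem : ∀ θ : ℝ, circleMap (-1) 1 θ ∈ S := by
    intro θ
    show ‖circleMap (-1) 1 θ + 1‖ = 1
    simp [circleMap]
  have hgc : Continuous (fun θ : ℝ => gFun μ (circleMap (-1) 1 θ)) :=
    hgS.comp_continuous (continuous_circleMap _ _) hmem
  -- global bound on the sphere
  have hSeq : S = Metric.sphere (-1 : ℂ) 1 := by
    ext z
    simp [hS_def, Metric.mem_sphere, Complex.dist_eq, sub_neg_eq_add]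
  obtain ⟨B₁, hB₁⟩ : ∃ B, ∀ z ∈ S, ‖gFun μ z‖ ≤ B := by
    rw [hSeq] at hgS ⊢
    exact (isCompact_sphere _ _).exists_bound_of_continuousOn hgS
  set B : ℝ := max B₁ 0 with hB_def
  have hB0 : 0 ≤ B := le_max_right _ _
  have hB : ∀ z ∈ S, |gFun μ z| ≤ B := by
    intro z hz
    exact (hB₁ z hz).trans (le_max_left _ _)
  have hBc : ∀ θ : ℝ, |gFun μ (circleMap (-1) 1 θ)| ≤ B := fun θ => hB _ (hmem θ)
  set gc : ℝ → ℝ := fun θ => gFun μ (circleMap (-1) 1 θ) with hgc_def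
  set M : ℝ := ∫ θ in (0:ℝ)..(2*π), gc θ with hM_def
  refine ⟨fun z => if ‖z + 1‖ < 1
    then (4*π)⁻¹ * M + (4*π)⁻¹ * ∫ θ in (0:ℝ)..(2*π), gc θ * pker (z+1) θ
    else (4*π)⁻¹ * M + (1/2) * gFun μ z, ?_, ?_⟩
  swap
  · intro z hz
    dsimp only
    rw [if_pos hz, cauchy_re_formula (gFun μ) hgc z hz]
  intro z₀ hz₀
  have hz₀' : ‖z₀ + 1‖ ≤ 1 := hz₀
  rcases lt_or_eq_of_le hz₀' with hin | hbd
  -- interior point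
  · set a := ‖z₀ + 1‖ with ha_def
    have ha1 : a < 1 := hin
    have ha0 : 0 ≤ a := norm_nonneg _
    set r : ℝ := (1 - a) / 2 with hr_def
    have hr : 0 < r := by rw [hr_def]; linarith
    set ρ : ℝ := (1 + a) / 2 with hρ_def
    have hρ1 : ρ < 1 := by rw [hρ_def]; linarith
    have hball : ∀ z ∈ Metric.ball z₀ r, ‖z + 1‖ < ρ := by
      intro z hzb
      have h1 : ‖z - z₀‖ < r := by
        rw [← Complex.dist_eq]; exact Metric.mem_ball.1 hzb
      calc ‖z + 1‖ = ‖(z₀ + 1) + (z - z₀)‖ := by ring_nf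
        _ ≤ ‖z₀ + 1‖ + ‖z - z₀‖ := norm_add_le _ _
        _ < a + r := by rw [← ha_def]; linarith
        _ = ρ := by rw [hρ_def, hr_def]; ring
    have hGcont : ContinuousWithinAt
        (fun z => (4*π)⁻¹ * M + (4*π)⁻¹ * ∫ θ in (0:ℝ)..(2*π), gc θ * pker (z+1) θ)
        {z : ℂ | ‖z + 1‖ ≤ 1} z₀ := by
      apply ContinuousWithinAt.add continuousWithinAt_const
      apply ContinuousWithinAt.mul continuousWithinAt_const
      apply intervalIntegral.continuousWithinAt_of_dominated_interval
        (bound := fun _ => B * ((1 - ρ)^2)⁻¹)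
      · apply Filter.Eventually.of_forall
        intro z
        have hpm : Measurable (pker (z+1)) := by
          unfold pker
          exact measurable_const.div (((continuous_norm.comp
            ((continuous_circleMap 0 1).sub continuous_const)).pow 2).measurable)
        exact (hgc.measurable.mul hpm).aestronglyMeasurable
      · filter_upwards [mem_nhdsWithin_of_mem_nhds (Metric.ball_mem_nhds z₀ hr)] with z hzb
        apply Filter.Eventually.of_forall
        intro θ _
        have hwρ : ‖z + 1‖ < ρ := hball z hzb
        have hw1 : ‖z + 1‖ < 1 := hwρ.trans_le hρ1.le
        have hP0 : 0 ≤ pker (z+1) θ := pker_nonneg _ hw1 θ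
        have hu : ‖circleMap 0 1 θ‖ = 1 := by simp [circleMap]
        have hd : 1 - ρ ≤ ‖circleMap 0 1 θ - (z+1)‖ := by
          have htri : ‖circleMap 0 1 θ‖
              ≤ ‖circleMap 0 1 θ - (z+1)‖ + ‖z+1‖ := by
            calc ‖circleMap 0 1 θ‖
                = ‖(circleMap 0 1 θ - (z+1)) + (z+1)‖ := by ring_nf
              _ ≤ _ := norm_add_le _ _
          rw [hu] at htri
          linarith
        have hpk : pker (z+1) θ ≤ ((1 - ρ)^2)⁻¹ := by
          unfold pker
          rw [inv_eq_one_div]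
          apply div_le_div₀ (by norm_num)
          · nlinarith [norm_nonneg (z+1)]
          · have h1ρ : 0 < 1 - ρ := by linarith
            positivity
          · exact pow_le_pow_left₀ (by linarith) hd 2
        calc ‖gc θ * pker (z+1) θ‖ = |gc θ| * pker (z+1) θ := by
              rw [Real.norm_eq_abs, abs_mul, abs_of_nonneg hP0]
          _ ≤ B * ((1 - ρ)^2)⁻¹ :=
              mul_le_mul (hBc θ) hpk hP0 hB0
      · exact intervalIntegrable_const
      · apply Filter.Eventually.of_forall
        intro θ _
        apply ContinuousAt.continuousWithinAt
        apply ContinuousAt.mul continuousAt_const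
        have hnum : Continuous fun z : ℂ => 1 - ‖z+1‖ ^ 2 :=
          continuous_const.sub ((continuous_norm.comp
            (continuous_id.add continuous_const)).pow 2)
        have hden : Continuous fun z : ℂ => ‖circleMap 0 1 θ - (z+1)‖ ^ 2 :=
          (continuous_norm.comp
            (continuous_const.sub (continuous_id.add continuous_const))).pow 2
        have hdenne : ‖circleMap 0 1 θ - (z₀+1)‖ ^ 2 ≠ 0 :=
          pow_ne_zero 2 (norm_ne_zero_iff.mpr (circleMap_ne (z₀+1) hin θ))
        exact ContinuousAt.div hnum.continuousAt hden.continuousAt hdenne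
    apply hGcont.congr_of_eventuallyEq
    · have hnb : ∀ᶠ z in nhdsWithin z₀ {z : ℂ | ‖z + 1‖ ≤ 1},
          z ∈ Metric.ball z₀ r :=
        mem_nhdsWithin_of_mem_nhds (Metric.ball_mem_nhds z₀ hr)
      filter_upwards [hnb] with z hzb
      rw [if_pos ((hball z hzb).trans_le hρ1.le)]
    · rw [if_pos hin]
  -- boundary point
  · have hw₀ : ‖z₀ + 1‖ = 1 := hbd
    have hz₀S : z₀ ∈ S := hw₀
    have hz₀nlt : ¬ ‖z₀ + 1‖ < 1 := by rw [hw₀]; exact lt_irrefl 1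
    rw [Metric.continuousWithinAt_iff]
    intro ε hε
    obtain ⟨δ₁, hδ₁pos, hδ₁⟩ := (Metric.continuousWithinAt_iff).1 (hgS z₀ hz₀S) (ε/2)
      (half_pos hε)
    set δ : ℝ := min δ₁ (min 1 (ε * δ₁^2 / (12 * B + 1))) with hδ_def
    have hδpos : 0 < δ := by
      apply lt_min hδ₁pos
      apply lt_min one_pos
      positivity
    refine ⟨δ, hδpos, ?_⟩
    intro y hy hdist
    have hδδ₁ : δ ≤ δ₁ := min_le_left _ _
    have hδ1 : δ ≤ 1 := (min_le_right _ _).trans (min_le_left _ _)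
    have hδε : δ ≤ ε * δ₁^2 / (12 * B + 1) := (min_le_right _ _).trans (min_le_right _ _)
    have hnear : ∀ θ : ℝ, ‖circleMap 0 1 θ - (z₀+1)‖ < δ₁
        → |gc θ - gFun μ z₀| ≤ ε/2 := by
      intro θ hθ
      have hdd : dist (circleMap (-1) 1 θ) z₀ = ‖circleMap 0 1 θ - (z₀+1)‖ := by
        rw [Complex.dist_eq]
        congr 1
        simp [circleMap]
        ring
      have := hδ₁ (hmem θ) (by rw [hdd]; exact hθ)
      rw [Real.dist_eq] at this
      exact this.le
    rw [Real.dist_eq]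
    rw [if_neg hz₀nlt]
    by_cases hyin : ‖y + 1‖ < 1
    · rw [if_pos hyin]
      have hest := poisson_boundary_est gc hgc B hBc (gFun μ z₀) (hB z₀ hz₀S) (z₀+1)
        (ε/2) δ₁ (half_pos hε) hδ₁pos hnear (y+1) hyin
      have hww : ‖(y+1) - (z₀+1)‖ = dist y z₀ := by
        rw [Complex.dist_eq]; congr 1; ring
      have habsw : ‖y + 1‖ ≤ 1 := hyin.le
      have hA1 : 1 - ‖y+1‖ ^ 2 ≤ 2 * dist y z₀ := by
        have htri : (1:ℝ) ≤ ‖(z₀+1) - (y+1)‖ + ‖y+1‖ := by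
          calc (1:ℝ) = ‖z₀ + 1‖ := hw₀.symm
            _ = ‖((z₀+1) - (y+1)) + (y+1)‖ := by ring_nf
            _ ≤ _ := norm_add_le _ _
        have hsym : ‖(z₀+1) - (y+1)‖ = dist y z₀ :=
          (norm_sub_rev _ _).trans hww
        rw [hsym] at htri
        nlinarith [norm_nonneg (y+1), dist_nonneg (x := y) (y := z₀)]
      have hA2 : ‖(y+1) - (z₀+1)‖ ^ 2 ≤ dist y z₀ := by
        rw [hww]
        nlinarith [dist_nonneg (x := y) (y := z₀), hdist, hδ1]
      have hπ0 : 0 < π := pi_pos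
      have hfinal : |(∫ θ in (0:ℝ)..(2*π), gc θ * pker (y+1) θ) - 2*π*(gFun μ z₀)|
          ≤ 2*π*(ε/2) + (2*B/δ₁^2) * (4*π*(3 * dist y z₀)) := by
        refine hest.trans ?_
        have h1 : 4*π*(1 - ‖y+1‖ ^ 2) + 4*π*‖(y+1) - (z₀+1)‖^2
            ≤ 4*π*(3 * dist y z₀) := by
          nlinarith [hA1, hA2]
        have h2 : 0 ≤ 2*B/δ₁^2 := by positivity
        have h3 := mul_le_mul_of_nonneg_left h1 h2
        linarith
      -- assemble
      have hexp := four_pi_id1 M (∫ θ in (0:ℝ)..(2*π), gc θ * pker (y+1) θ) (gFun μ z₀)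
      rw [hexp, abs_mul, abs_of_nonneg (by positivity : (0:ℝ) ≤ (4*π)⁻¹)]
      have hb1 : (4*π)⁻¹ * |(∫ θ in (0:ℝ)..(2*π), gc θ * pker (y+1) θ) - 2*π*(gFun μ z₀)|
          ≤ (4*π)⁻¹ * (2*π*(ε/2) + (2*B/δ₁^2) * (4*π*(3 * dist y z₀))) :=
        mul_le_mul_of_nonneg_left hfinal (by positivity)
      rw [four_pi_id2 ε B δ₁ (dist y z₀) hδ₁pos.ne'] at hb1
      have hd1 : dist y z₀ < ε * δ₁^2 / (12 * B + 1) := lt_of_lt_of_le hdist hδε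
      have hb3 : (6*B/δ₁^2) * dist y z₀ < ε/2 :=
        div_step B δ₁ ε (dist y z₀) hδ₁pos hB0 dist_nonneg hd1.le hε
      linarith
    · rw [if_neg hyin]
      have hyS : y ∈ S := by
        have : ‖y + 1‖ ≤ 1 := hy
        exact le_antisymm this (not_lt.1 hyin)
      have := hδ₁ hyS (lt_of_lt_of_le hdist hδδ₁)
      rw [Real.dist_eq] at this
      have heq : (4*π)⁻¹ * M + 1/2 * gFun μ y - ((4*π)⁻¹ * M + 1/2 * gFun μ z₀)
          = 1/2 * (gFun μ y - gFun μ z₀) := by ring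
      rw [heq, abs_mul]
      rw [show |(1:ℝ)/2| = 1/2 by norm_num]
      linarith
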